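/- Let G be a 3-uniform hypergraph with λ(G) > λ(K_{k+1}^3) and let x be an optimum weight vector on G. Then for any vertex v of G, its weight x_v satisfies x_v < 1 - √(k(k-1))/(k+1). -/

import Mathlib

open Finset

/-- A (finite) hypergraph with vertex set `verts ⊆ ℕ` and edge set `edges`. -/
structure NatHypergraph where
  verts : Finset ℕ
  edges : Finset (Finset ℕ)

/-- Well-formedness: every edge is a subset of the vertex set. -/
def NatHypergraph.IsWf (G : NatHypergraph) : Prop := ∀ e ∈ G.edges, e ⊆ G.verts

/-- `G` is `r`-uniform: every edge has `r` vertices. -/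
def NatHypergraph.IsUniform (G : NatHypergraph) (r : ℕ) : Prop := ∀ e ∈ G.edges, e.card = r

/-- The Lagrangian polynomial `λ(G, x) = ∑_{e ∈ E(G)} ∏_{i ∈ e} x_i`. -/
noncomputable def lagPoly (G : NatHypergraph) (x : ℕ → ℝ) : ℝ := ∑ e ∈ G.edges, ∏ i ∈ e, x i

/-- Feasible weight vectors: the standard simplex on the vertex set of `G`. -/
def simplex (G : NatHypergraph) : Set (ℕ → ℝ) :=
  {x | (∀ i, 0 ≤ x i ∧ x i ≤ 1) ∧ ∑ i ∈ G.verts, x i = 1}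

/-- The Lagrangian `λ(G)`: the supremum of `λ(G, x)` over the simplex. -/
noncomputable def lag (G : NatHypergraph) : ℝ := sSup (lagPoly G '' simplex G)

/-- The complete 3-graph `K_m³` on `m` vertices. -/
def completeG (m : ℕ) : NatHypergraph :=
  ⟨Finset.range m, (Finset.range m).powersetCard 3⟩

lemma lag_bdd (G : NatHypergraph) : BddAbove (lagPoly G '' simplex G) := by
  refine ⟨G.edges.card, ?_⟩
  rintro _ ⟨y, hy, rfl⟩
  calc lagPoly G y ≤ ∑ _e ∈ G.edges, (1:ℝ) :=
        Finset.sum_le_sum (fun e _ => Finset.prod_le_one (fun i _ => (hy.1 i).1) (fun i _ => (hy.1 i).2))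
    _ = G.edges.card := by simp

lemma le_lag (G : NatHypergraph) {y : ℕ → ℝ} (hy : y ∈ simplex G) : lagPoly G y ≤ lag G :=
  le_csSup (lag_bdd G) ⟨y, hy, rfl⟩

lemma choose2 (n : ℕ) : ((n.choose 2 : ℕ) : ℝ) * 2 = n * ((n:ℝ) - 1) := by
  induction n with
  | zero => simp
  | succ m ih =>
    rw [Nat.choose_succ_succ m 1, Nat.choose_one_right]
    push_cast
    push_cast at ih
    linarith

lemma choose3 (n : ℕ) : ((n.choose 3 : ℕ) : ℝ) * 6 = n * ((n:ℝ) - 1) * ((n:ℝ) - 2) := by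
  induction n with
  | zero => simp
  | succ m ih =>
    rw [Nat.choose_succ_succ m 2]
    have h2 := choose2 m
    push_cast
    push_cast at ih
    nlinarith [h2, ih]

lemma pair_sum_le (x : ℕ → ℝ) (hx : ∀ i, 0 ≤ x i) (T : Finset ℕ) :
    ∑ p ∈ T.powersetCard 2, ∏ i ∈ p, x i ≤ (∑ i ∈ T, x i)^2 / 2 := by
  induction T using Finset.induction_on with
  | empty =>
    rw [show ((∅:Finset ℕ).powersetCard 2) = ∅ by simp]
    simp
  | @insert a T ha ih =>
    rw [show (2:ℕ) = 1 + 1 from rfl] at *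
    rw [Finset.powersetCard_succ_insert ha]
    have hdis : Disjoint (T.powersetCard (1+1)) ((T.powersetCard 1).image (insert a)) := by
      rw [Finset.disjoint_left]
      rintro p hp hp'
      obtain ⟨q, hq, hh⟩ := Finset.mem_image.mp hp'
      have hap : a ∈ p := by rw [← hh]; exact Finset.mem_insert_self a q
      exact ha ((Finset.mem_powersetCard.mp hp).1 hap)
    rw [Finset.sum_union hdis]
    have himg : ∑ p ∈ (T.powersetCard 1).image (insert a), ∏ i ∈ p, x i
        = x a * ∑ i ∈ T, x i := by
      have hinj : ∀ q ∈ T.powersetCard 1, ∀ q' ∈ T.powersetCard 1,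
          insert a q = insert a q' → q = q' := by
        intro q hq q' hq' h
        have haq : a ∉ q := fun h' => ha ((Finset.mem_powersetCard.mp hq).1 h')
        have haq' : a ∉ q' := fun h' => ha ((Finset.mem_powersetCard.mp hq').1 h')
        rw [← Finset.erase_insert haq, ← Finset.erase_insert haq', h]
      rw [Finset.sum_image hinj]
      rw [Finset.powersetCard_one, Finset.sum_map, Finset.mul_sum]
      refine Finset.sum_congr rfl (fun i hi => ?_)
      have hai : a ∉ ({i} : Finset ℕ) := by
        simp only [Finset.mem_singleton]
        rintro rfl; exact ha hi
      simp [Finset.prod_insert hai]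
    rw [himg, Finset.sum_insert ha]
    have hT : 0 ≤ ∑ i ∈ T, x i := Finset.sum_nonneg (fun i _ => hx i)
    nlinarith [sq_nonneg (x a), ih]

lemma lagK_lb (k : ℕ) :
    (k:ℝ) * ((k:ℝ) - 1) / (6 * ((k:ℝ)+1)^2) ≤ lag (completeG (k+1)) := by
  have hk1 : (0:ℝ) < (k:ℝ) + 1 := by positivity
  set u : ℕ → ℝ := fun i => if i < k+1 then 1/((k:ℝ)+1) else 0 with hu'
  have hu_mem : u ∈ simplex (completeG (k+1)) := by
    constructor
    · intro i
      by_cases h : i < k+1 <;> simp only [hu', h, if_true, if_false]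
      · constructor
        · positivity
        · rw [div_le_one hk1]; linarith
      · norm_num
    · show ∑ i ∈ Finset.range (k+1), u i = 1
      rw [Finset.sum_congr rfl (fun i hi => by
        simp [hu', Finset.mem_range.mp hi, Nat.lt_succ_iff.mp (Finset.mem_range.mp hi)] : ∀ i ∈ Finset.range (k+1), u i = 1/((k:ℝ)+1))]
      rw [Finset.sum_const, Finset.card_range, nsmul_eq_mul]
      push_cast
      field_simp
  have hval : lagPoly (completeG (k+1)) u = (((k+1).choose 3 : ℕ) : ℝ) * (1/((k:ℝ)+1))^3 := by
    show ∑ e ∈ (Finset.range (k+1)).powersetCard 3, ∏ i ∈ e, u i = _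
    rw [Finset.sum_congr rfl (fun e he => ?_), Finset.sum_const, Finset.card_powersetCard,
      Finset.card_range, nsmul_eq_mul]
    obtain ⟨hsub, hcard⟩ := Finset.mem_powersetCard.mp he
    rw [Finset.prod_congr rfl (fun i hi => ?_), Finset.prod_const, hcard]
    simp [hu', Finset.mem_range.mp (hsub hi), Nat.lt_succ_iff.mp (Finset.mem_range.mp (hsub hi))]
  have hle := le_lag (completeG (k+1)) hu_mem
  rw [hval] at hle
  refine le_trans (le_of_eq ?_) hle
  have h3 := choose3 (k+1)
  push_cast at h3 ⊢
  have hne : ((k:ℝ)+1) ≠ 0 := ne_of_gt hk1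
  field_simp
  nlinarith [h3]


/-- If `G` is a 3-graph with `λ(G) > λ(K_{k+1}³)` and `x` is an optimum weight
vector, then every vertex `v` has weight `x v < 1 − √(k(k−1))/(k+1)`. -/
theorem stmt_6 (k : ℕ) (G : NatHypergraph) (hwf : G.IsWf) (hu : G.IsUniform 3)
    (hlag : lag (completeG (k + 1)) < lag G)
    (x : ℕ → ℝ) (hx : x ∈ simplex G) (hopt : lagPoly G x = lag G) :
    ∀ v ∈ G.verts, x v < 1 - Real.sqrt ((k : ℝ) * ((k : ℝ) - 1)) / ((k : ℝ) + 1) := by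
  intro v hv
  obtain ⟨hxb, hsum⟩ := hx
  have hx0 : ∀ i, 0 ≤ x i := fun i => (hxb i).1
  have hx1 : ∀ i, x i ≤ 1 := fun i => (hxb i).2
  have hk1 : (0:ℝ) < (k:ℝ) + 1 := by positivity
  have hkk : (0:ℝ) ≤ (k:ℝ) * ((k:ℝ) - 1) := by
    rcases Nat.eq_zero_or_pos k with h | h
    · simp [h]
    · have h1 : (1:ℝ) ≤ (k:ℝ) := by exact_mod_cast h
      nlinarith
  set s : ℝ := Real.sqrt ((k:ℝ) * ((k:ℝ) - 1)) / ((k:ℝ) + 1) with hsdef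
  have hs0 : 0 ≤ s := by positivity
  have hssq : s^2 = (k:ℝ) * ((k:ℝ) - 1) / ((k:ℝ)+1)^2 := by
    rw [hsdef, div_pow, Real.sq_sqrt hkk]
  have hK := lagK_lb k
  have hlam_lb : (k:ℝ) * ((k:ℝ) - 1) / (6 * ((k:ℝ)+1)^2) < lagPoly G x := by
    rw [hopt]; exact lt_of_le_of_lt hK hlag
  have hlampos : 0 < lagPoly G x := by
    have h0 : (0:ℝ) ≤ (k:ℝ) * ((k:ℝ) - 1) / (6 * ((k:ℝ)+1)^2) :=
      div_nonneg hkk (by positivity)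
    linarith
  have key : s^2 < (1 - x v)^2 → x v < 1 - s := by
    intro h
    nlinarith [hs0, hx1 v, sq_nonneg (s - (1 - x v)), sq_nonneg (s + (1 - x v))]
  have hsum' : ∑ i ∈ G.verts.erase v, x i = 1 - x v := by
    have h := Finset.add_sum_erase G.verts x hv
    rw [hsum] at h
    linarith
  rcases eq_or_lt_of_le (hx1 v) with hv1 | hv1
  · exfalso
    have hz : ∀ i ∈ G.verts.erase v, x i = 0 := by
      intro i hi
      have h0 : ∑ j ∈ G.verts.erase v, x j = 0 := by rw [hsum', hv1]; ring
      exact (Finset.sum_eq_zero_iff_of_nonneg (fun j _ => hx0 j)).mp h0 i hi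
    have hlam0 : lagPoly G x = 0 := by
      apply Finset.sum_eq_zero
      intro e he
      obtain ⟨i, hie, hiv⟩ := Finset.exists_mem_ne (by rw [hu e he]; norm_num) v
      have hiz : x i = 0 := hz i (Finset.mem_erase.mpr ⟨hiv, hwf e he hie⟩)
      exact Finset.prod_eq_zero hie hiz
    linarith
  rcases eq_or_lt_of_le (hx0 v) with hv0 | hv0
  · have hlt : (k:ℝ)*((k:ℝ)-1) < ((k:ℝ)+1)^2 := by nlinarith [(Nat.cast_nonneg k : (0:ℝ) ≤ (k:ℝ))]
    have hs2 : s^2 < 1 := by rw [hssq]; exact (div_lt_one (by positivity)).mpr hlt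
    nlinarith [hs0, hs2, hv0, sq_nonneg (s - 1)]
  · apply key
    set c₀ : ℝ := 1 - x v with hc0def
    have hc0 : 0 < c₀ := by rw [hc0def]; linarith
    set F := G.edges.filter (fun e => v ∈ e) with hFdef
    set F' := G.edges.filter (fun e => ¬ v ∈ e) with hF'def
    set P := ∑ e ∈ F, ∏ i ∈ e.erase v, x i with hPdef
    set Q := ∑ e ∈ F', ∏ i ∈ e, x i with hQdef
    have hsplit : ∀ z : ℕ → ℝ, lagPoly G z
        = ∑ e ∈ F, ∏ i ∈ e, z i + ∑ e ∈ F', ∏ i ∈ e, z i := by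
      intro z
      rw [hFdef, hF'def]
      exact (Finset.sum_filter_add_sum_filter_not G.edges _ _).symm
    have hlamPQ : lagPoly G x = x v * P + Q := by
      rw [hsplit x, hPdef, Finset.mul_sum, hQdef]
      congr 1
      refine Finset.sum_congr rfl (fun e he => ?_)
      have he' := he
      rw [hFdef, Finset.mem_filter] at he'
      exact (Finset.mul_prod_erase e x he'.2).symm
    have hxile : ∀ i ∈ G.verts.erase v, x i ≤ c₀ := by
      intro i hi
      rw [← hsum']
      exact Finset.single_le_sum (fun j _ => hx0 j) hi
    set y : ℝ → ℕ → ℝ :=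
      fun t i => if i = v then t else if i ∈ G.verts then (1 - t)/c₀ * x i else x i with hydef
    have hyv : ∀ t, y t v = t := fun t => by simp [hydef]
    have hyi : ∀ t, ∀ i ∈ G.verts.erase v, y t i = (1 - t)/c₀ * x i := by
      intro t i hi
      obtain ⟨hiv, hiV⟩ := Finset.mem_erase.mp hi
      simp [hydef, hiv, hiV]
    have hy_mem : ∀ t ∈ Set.Icc (0:ℝ) 1, y t ∈ simplex G := by
      rintro t ⟨ht0, ht1⟩
      have hct : 0 ≤ (1 - t)/c₀ := div_nonneg (by linarith) hc0.le
      constructor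
      · intro i
        by_cases hiv : i = v
        · subst hiv; rw [hyv]; exact ⟨ht0, ht1⟩
        by_cases hiV : i ∈ G.verts
        · have hh : y t i = (1 - t)/c₀ * x i := hyi t i (Finset.mem_erase.mpr ⟨hiv, hiV⟩)
          rw [hh]
          constructor
          · exact mul_nonneg hct (hx0 i)
          · have hxc : x i ≤ c₀ := hxile i (Finset.mem_erase.mpr ⟨hiv, hiV⟩)
            calc (1 - t)/c₀ * x i ≤ (1 - t)/c₀ * c₀ := mul_le_mul_of_nonneg_left hxc hct
              _ = 1 - t := div_mul_cancel₀ _ hc0.ne'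
              _ ≤ 1 := by linarith
        · have hh : y t i = x i := by simp [hydef, hiv, hiV]
          rw [hh]; exact ⟨hx0 i, hx1 i⟩
      · show ∑ i ∈ G.verts, y t i = 1
        rw [← Finset.add_sum_erase G.verts (y t) hv, hyv]
        rw [Finset.sum_congr rfl (hyi t), ← Finset.mul_sum, hsum']
        rw [div_mul_cancel₀ _ hc0.ne']
        ring
    have hy_val : ∀ t : ℝ, lagPoly G (y t) = t * ((1-t)/c₀)^2 * P + ((1-t)/c₀)^3 * Q := by
      intro t
      rw [hsplit (y t)]
      congr 1
      · rw [hPdef, Finset.mul_sum]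
        refine Finset.sum_congr rfl (fun e he => ?_)
        have he' := he
        rw [hFdef, Finset.mem_filter] at he'
        obtain ⟨heE, hve⟩ := he'
        rw [← Finset.mul_prod_erase e (y t) hve, hyv]
        rw [Finset.prod_congr rfl (fun i hi => hyi t i
            (Finset.mem_erase.mpr ⟨(Finset.mem_erase.mp hi).1,
              hwf e heE (Finset.mem_of_mem_erase hi)⟩))]
        rw [Finset.prod_mul_distrib, Finset.prod_const,
          Finset.card_erase_of_mem hve, hu e heE]
        norm_num
        ring
      · rw [hQdef, Finset.mul_sum]
        refine Finset.sum_congr rfl (fun e he => ?_)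
        have he' := he
        rw [hF'def, Finset.mem_filter] at he'
        obtain ⟨heE, hve⟩ := he'
        rw [Finset.prod_congr rfl (fun i hi => hyi t i
            (Finset.mem_erase.mpr ⟨fun h => hve (h ▸ hi), hwf e heE hi⟩))]
        rw [Finset.prod_mul_distrib, Finset.prod_const, hu e heE]
    set A := P * c₀ - Q with hAdef
    set B := 3*Q - 2*P*c₀ with hBdef
    set C := P * c₀ - 3*Q with hCdef
    set g : ℝ → ℝ := fun t => A * t^3 + B * t^2 + C * t + Q with hgdef
    have hyx : y (x v) = x := by
      funext i
      by_cases hiv : i = v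
      · rw [hiv]; exact hyv (x v)
      by_cases hiV : i ∈ G.verts
      · have h1 : (1 - x v)/c₀ = 1 := by rw [hc0def]; exact div_self (by linarith)
        simp [hydef, hiv, hiV, h1]
      · simp [hydef, hiv, hiV]
    have hgty : ∀ t, g t = lagPoly G (y t) * c₀^3 := by
      intro t
      rw [hy_val t, hgdef, hAdef, hBdef, hCdef]
      field_simp
      ring
    have hgmax : IsLocalMax g (x v) := by
      have hmem : Set.Icc (0:ℝ) 1 ∈ nhds (x v) := Icc_mem_nhds hv0 hv1
      filter_upwards [hmem] with t ht
      rw [hgty t, hgty (x v), hyx]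
      have h1 : lagPoly G (y t) ≤ lagPoly G x := by
        rw [hopt]; exact le_lag G (hy_mem t ht)
      exact mul_le_mul_of_nonneg_right h1 (pow_nonneg hc0.le 3)
    have hD : HasDerivAt g (A * (3 * (x v)^2) + B * (2 * (x v)) + C * 1) (x v) := by
      have h3 : HasDerivAt (fun t : ℝ => t^3) (3 * (x v)^2) (x v) := by
        simpa using hasDerivAt_pow 3 (x v)
      have h2 : HasDerivAt (fun t : ℝ => t^2) (2 * (x v)) (x v) := by
        simpa using hasDerivAt_pow 2 (x v)
      have h1 : HasDerivAt (fun t : ℝ => t) 1 (x v) := hasDerivAt_id (x v)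
      exact (((h3.const_mul A).add (h2.const_mul B)).add (h1.const_mul C)).add_const Q
    have hD0 : A * (3 * (x v)^2) + B * (2 * (x v)) + C * 1 = 0 := by
      rw [← hD.deriv]; exact hgmax.deriv_eq_zero
    have hPQ : P * (1 - 3 * x v) = 3 * Q := by
      rw [hAdef, hBdef, hCdef, hc0def] at hD0
      have hfac : (1 - x v)^2 * (P * (1 - 3 * x v) - 3 * Q) = 0 := by
        linear_combination hD0
      rcases mul_eq_zero.mp hfac with h | h
      · exfalso; nlinarith [pow_pos (show (0:ℝ) < 1 - x v by linarith) 2]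
      · linarith
    have h3lam : 3 * lagPoly G x = P := by
      linear_combination 3*hlamPQ - hPQ
    have hPle : P ≤ c₀^2 / 2 := by
      have hinj : ∀ e ∈ F, ∀ e' ∈ F, e.erase v = e'.erase v → e = e' := by
        intro e he e' he' h
        rw [hFdef, Finset.mem_filter] at he he'
        rw [← Finset.insert_erase he.2, h, Finset.insert_erase he'.2]
      have h1 : P = ∑ p ∈ F.image (fun e => e.erase v), ∏ i ∈ p, x i := by
        rw [hPdef, Finset.sum_image hinj]
      have h2 : F.image (fun e => e.erase v) ⊆ (G.verts.erase v).powersetCard 2 := by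
        intro p hp
        obtain ⟨e, he, rfl⟩ := Finset.mem_image.mp hp
        rw [hFdef, Finset.mem_filter] at he
        refine Finset.mem_powersetCard.mpr ⟨?_, ?_⟩
        · exact Finset.erase_subset_erase v (hwf e he.1)
        · rw [Finset.card_erase_of_mem he.2, hu e he.1]
      have h3 : ∑ p ∈ F.image (fun e => e.erase v), ∏ i ∈ p, x i
          ≤ ∑ p ∈ (G.verts.erase v).powersetCard 2, ∏ i ∈ p, x i :=
        Finset.sum_le_sum_of_subset_of_nonneg h2
          (fun p _ _ => Finset.prod_nonneg (fun i _ => hx0 i))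
      have h4 := pair_sum_le x hx0 (G.verts.erase v)
      rw [hsum'] at h4
      calc P = _ := h1
        _ ≤ _ := h3
        _ ≤ c₀^2/2 := h4
    clear_value P Q c₀ s
    have h6 : 6 * lagPoly G x ≤ c₀^2 := by
      rw [show (6:ℝ) * lagPoly G x = 2 * (3 * lagPoly G x) by ring, h3lam]
      linarith [hPle]
    have heq : (k:ℝ)*((k:ℝ)-1)/((k:ℝ)+1)^2
        = 6 * ((k:ℝ)*((k:ℝ)-1)/(6*((k:ℝ)+1)^2)) := by
      field_simp
    rw [hssq, heq]
    linarith [hlam_lb, h6]
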